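/- For any real matrices M (of size m × p) and N (of size m × q), the nuclear norm of the column-wise concatenation [M, N] is at most the sum of the nuclear norms of M and N: ‖[M, N]‖_* ≤ ‖M‖_* + ‖N‖_*. -/

import Mathlib

/-- The nuclear norm of a real matrix `A`: the sum of its singular values, i.e. the sum of the
square roots of the eigenvalues of the positive semidefinite symmetric matrix `Aᵀ * A`. -/
noncomputable def nuclearNorm {m n : Type*} [Fintype m] [Fintype n] [DecidableEq n]
    (A : Matrix m n ℝ) : ℝ :=
  ∑ i, Real.sqrt ((show (Matrix.transpose A * A).IsHermitian by
    simpa using Matrix.isHermitian_conjTranspose_mul_self A).eigenvalues i)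

theorem Matrix.isHermitian_transpose_mul_self {m n : Type*} [Fintype m]
    (A : Matrix m n ℝ) : (Matrix.transpose A * A).IsHermitian := by
  simpa using Matrix.isHermitian_conjTranspose_mul_self A

open Matrix in
/-- Cauchy–Schwarz for dot products of real vectors. -/
private lemma dot_le_sqrt {n : Type*} [Fintype n] (x y : n → ℝ) :
    x ⬝ᵥ y ≤ Real.sqrt (x ⬝ᵥ x) * Real.sqrt (y ⬝ᵥ y) := by
  have h := Finset.sum_mul_sq_le_sq_mul_sq Finset.univ x y
  have hx : x ⬝ᵥ x = ∑ i, x i ^ 2 := by simp [dotProduct, sq]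
  have hy : y ⬝ᵥ y = ∑ i, y i ^ 2 := by simp [dotProduct, sq]
  calc x ⬝ᵥ y ≤ |x ⬝ᵥ y| := le_abs_self _
    _ = Real.sqrt ((x ⬝ᵥ y) ^ 2) := (Real.sqrt_sq_eq_abs _).symm
    _ ≤ Real.sqrt ((∑ i, x i ^ 2) * (∑ i, y i ^ 2)) := Real.sqrt_le_sqrt h
    _ = Real.sqrt (x ⬝ᵥ x) * Real.sqrt (y ⬝ᵥ y) := by
        rw [hx, hy, Real.sqrt_mul (Finset.sum_nonneg fun i _ => sq_nonneg _)]

open Matrix in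
private lemma dot_mulVec_pair {m n : Type*} [Fintype m] [Fintype n]
    (B : Matrix m n ℝ) (a b : n → ℝ) :
    (B *ᵥ a) ⬝ᵥ (B *ᵥ b) = ((Bᵀ * B) *ᵥ a) ⬝ᵥ b := by
  rw [dotProduct_mulVec (B *ᵥ a) B b, ← Matrix.mulVec_transpose, Matrix.mulVec_mulVec]

open Matrix in
private lemma eigvec_dot_self {n : Type*} [Fintype n] [DecidableEq n]
    {A : Matrix n n ℝ} (hA : A.IsHermitian) (j : n) :
    ⇑(hA.eigenvectorBasis j) ⬝ᵥ ⇑(hA.eigenvectorBasis j) = 1 := by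
  have h := hA.eigenvectorBasis.orthonormal
  rw [orthonormal_iff_ite] at h
  have h2 := h j j
  simp only [if_pos rfl] at h2
  rw [if_pos trivial] at h2
  rw [← h2]
  simp only [PiLp.inner_apply, dotProduct, RCLike.inner_apply, conj_trivial]

open Matrix in
private lemma mulVec_eigvec_dot {m n : Type*} [Fintype m] [Fintype n] [DecidableEq n]
    (M : Matrix m n ℝ) (j : n) :
    (M *ᵥ ⇑((Matrix.isHermitian_transpose_mul_self M).eigenvectorBasis j)) ⬝ᵥ
      (M *ᵥ ⇑((Matrix.isHermitian_transpose_mul_self M).eigenvectorBasis j)) =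
    (Matrix.isHermitian_transpose_mul_self M).eigenvalues j := by
  set hM := Matrix.isHermitian_transpose_mul_self M with hMdef
  rw [dot_mulVec_pair,
    hM.mulVec_eigenvectorBasis j, smul_dotProduct]
  simp [eigvec_dot_self hM j]

open Matrix in
private lemma eigval_nonneg {m n : Type*} [Fintype m] [Fintype n] [DecidableEq n]
    (M : Matrix m n ℝ) (j : n) :
    0 ≤ (Matrix.isHermitian_transpose_mul_self M).eigenvalues j := by
  rw [← mulVec_eigvec_dot M j]
  exact Finset.sum_nonneg fun i _ => mul_self_nonneg _

open Matrix in
private lemma trace_transpose_mul_eq_sum {m p : Type*} [Fintype m] [Fintype p] [DecidableEq p]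
    (W M : Matrix m p ℝ) :
    (Wᵀ * M).trace = ∑ j, (W *ᵥ ⇑((Matrix.isHermitian_transpose_mul_self M).eigenvectorBasis j))
      ⬝ᵥ (M *ᵥ ⇑((Matrix.isHermitian_transpose_mul_self M).eigenvectorBasis j)) := by
  classical
  set hM := Matrix.isHermitian_transpose_mul_self M with hMdef
  set V : Matrix p p ℝ := (hM.eigenvectorUnitary : Matrix p p ℝ) with hVdef
  have hVV : V * Vᵀ = 1 := by
    have h : V * star V = 1 := Matrix.mem_unitaryGroup_iff.mp hM.eigenvectorUnitary.2
    calc V * Vᵀ = V * star V := by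
          rw [Matrix.star_eq_conjTranspose, Matrix.conjTranspose_eq_transpose_of_trivial]
      _ = 1 := h
  have h1 : (Wᵀ * M).trace = ((W * V)ᵀ * (M * V)).trace := by
    rw [Matrix.transpose_mul]
    calc (Wᵀ * M).trace = (V * Vᵀ * (Wᵀ * M)).trace := by rw [hVV, one_mul]
      _ = (Vᵀ * (Wᵀ * M) * V).trace := (Matrix.trace_mul_cycle Vᵀ (Wᵀ * M) V).symm
      _ = (Vᵀ * Wᵀ * (M * V)).trace := by simp only [Matrix.mul_assoc]
  rw [h1]
  simp only [Matrix.trace, Matrix.diag_apply, Matrix.mul_apply, Matrix.transpose_apply,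
    dotProduct, Matrix.mulVec]
  refine Finset.sum_congr rfl fun j _ => Finset.sum_congr rfl fun i _ => ?_
  have hcol : ∀ a, V a j = hM.eigenvectorBasis j a := fun a => by
    simp [hVdef]
  simp [dotProduct, hcol]

open Matrix in
/-- Any contraction `W` satisfies `tr (Wᵀ M) ≤ ‖M‖_*`. -/
private lemma trace_transpose_mul_le {m p : Type*} [Fintype m] [Fintype p] [DecidableEq p]
    (W M : Matrix m p ℝ) (hW : ∀ v : p → ℝ, (W *ᵥ v) ⬝ᵥ (W *ᵥ v) ≤ v ⬝ᵥ v) :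
    (Wᵀ * M).trace ≤ nuclearNorm M := by
  classical
  rw [trace_transpose_mul_eq_sum, nuclearNorm]
  set hM := Matrix.isHermitian_transpose_mul_self M with hMdef
  refine Finset.sum_le_sum fun j _ => ?_
  set v : p → ℝ := ⇑(hM.eigenvectorBasis j) with hv
  have hv1 : v ⬝ᵥ v = 1 := eigvec_dot_self hM j
  have hMv : (M *ᵥ v) ⬝ᵥ (M *ᵥ v) = hM.eigenvalues j := mulVec_eigvec_dot M j
  have hWv : (W *ᵥ v) ⬝ᵥ (W *ᵥ v) ≤ 1 := by simpa [hv1] using hW v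
  calc (W *ᵥ v) ⬝ᵥ (M *ᵥ v)
      ≤ Real.sqrt ((W *ᵥ v) ⬝ᵥ (W *ᵥ v)) * Real.sqrt ((M *ᵥ v) ⬝ᵥ (M *ᵥ v)) :=
        dot_le_sqrt _ _
    _ ≤ 1 * Real.sqrt (hM.eigenvalues j) := by
        rw [hMv]
        have h1 : Real.sqrt ((W *ᵥ v) ⬝ᵥ (W *ᵥ v)) ≤ 1 := by
          calc Real.sqrt ((W *ᵥ v) ⬝ᵥ (W *ᵥ v)) ≤ Real.sqrt 1 := Real.sqrt_le_sqrt hWv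
            _ = 1 := Real.sqrt_one
        exact mul_le_mul_of_nonneg_right h1 (Real.sqrt_nonneg _)
    _ = Real.sqrt (hM.eigenvalues j) := one_mul _

open Matrix

/-- The nuclear norm of the column-wise concatenation `[M, N]` is at most the sum of the
nuclear norms of `M` and `N`. -/
theorem nuclearNorm_fromColumns_le {m p q : Type*} [Fintype m] [Fintype p] [Fintype q]
    [DecidableEq p] [DecidableEq q] (M : Matrix m p ℝ) (N : Matrix m q ℝ) :
    nuclearNorm (Matrix.fromCols M N) ≤ nuclearNorm M + nuclearNorm N := by
  classical
  set A : Matrix m (p ⊕ q) ℝ := Matrix.fromCols M N with hAdef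
  set hA := Matrix.isHermitian_transpose_mul_self A with hAermdef
  set V : Matrix (p ⊕ q) (p ⊕ q) ℝ := (hA.eigenvectorUnitary : Matrix (p ⊕ q) (p ⊕ q) ℝ)
    with hVdef
  have hVV : V * Vᵀ = 1 := by
    have h : V * star V = 1 := Matrix.mem_unitaryGroup_iff.mp hA.eigenvectorUnitary.2
    calc V * Vᵀ = V * star V := by
          rw [Matrix.star_eq_conjTranspose, Matrix.conjTranspose_eq_transpose_of_trivial]
      _ = 1 := h
  have hVtV : Vᵀ * V = 1 := mul_eq_one_comm.mp hVV
  have hD : Vᵀ * (Aᴴ * A) * V = Matrix.diagonal hA.eigenvalues := by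
    have h := hA.conjStarAlgAut_star_eigenvectorUnitary
    rw [Unitary.conjStarAlgAut_star_apply] at h
    rw [Matrix.star_eq_conjTranspose, Matrix.conjTranspose_eq_transpose_of_trivial] at h
    simpa [RCLike.ofReal_real_eq_id, Matrix.conjTranspose_eq_transpose_of_trivial] using h
  have hGV : Aᵀ * A * V = V * Matrix.diagonal hA.eigenvalues := by
    show Aᴴ * A * V = _
    calc Aᴴ * A * V = (V * Vᵀ) * (Aᴴ * A * V) := by rw [hVV, one_mul]
      _ = V * (Vᵀ * (Aᴴ * A) * V) := by simp only [Matrix.mul_assoc]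
      _ = V * Matrix.diagonal hA.eigenvalues := by rw [hD]
  set e : (p ⊕ q) → ℝ := fun j => if hA.eigenvalues j = 0 then 0
      else (Real.sqrt (hA.eigenvalues j))⁻¹ with hedef
  have he : ∀ j, hA.eigenvalues j * e j * e j ≤ 1 := by
    intro j
    by_cases hj : hA.eigenvalues j = 0
    · simp [hedef, hj]
    · have h0 : 0 ≤ hA.eigenvalues j := eigval_nonneg A j
      have hpos : 0 < hA.eigenvalues j := lt_of_le_of_ne h0 (Ne.symm hj)
      have hs : Real.sqrt (hA.eigenvalues j) * Real.sqrt (hA.eigenvalues j) =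
          hA.eigenvalues j := Real.mul_self_sqrt h0
      have hsne : Real.sqrt (hA.eigenvalues j) ≠ 0 :=
        ne_of_gt (Real.sqrt_pos.mpr hpos)
      simp only [hedef, if_neg hj]
      rw [mul_assoc, ← mul_inv, hs, mul_inv_cancel₀ (ne_of_gt hpos)]
  have heval : ∀ j, e j * hA.eigenvalues j = Real.sqrt (hA.eigenvalues j) := by
    intro j
    by_cases hj : hA.eigenvalues j = 0
    · simp [hedef, hj]
    · have h0 : 0 ≤ hA.eigenvalues j := eigval_nonneg A j
      have hs : Real.sqrt (hA.eigenvalues j) * Real.sqrt (hA.eigenvalues j) =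
          hA.eigenvalues j := Real.mul_self_sqrt h0
      have hsne : Real.sqrt (hA.eigenvalues j) ≠ 0 := by
        intro h
        exact hj (by rw [← hs, h, mul_zero])
      simp only [hedef, if_neg hj]
      have h2 : (Real.sqrt (hA.eigenvalues j))⁻¹ * hA.eigenvalues j =
          (Real.sqrt (hA.eigenvalues j))⁻¹ *
            (Real.sqrt (hA.eigenvalues j) * Real.sqrt (hA.eigenvalues j)) := by rw [hs]
      rw [h2, ← mul_assoc, inv_mul_cancel₀ hsne, one_mul]
  set U : Matrix m (p ⊕ q) ℝ := A * (V * Matrix.diagonal e * Vᵀ) with hUdef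
  -- U is a contraction
  have hU : ∀ x : (p ⊕ q) → ℝ, (U *ᵥ x) ⬝ᵥ (U *ᵥ x) ≤ x ⬝ᵥ x := by
    intro x
    set y : (p ⊕ q) → ℝ := Vᵀ *ᵥ x with hy
    set z : (p ⊕ q) → ℝ := Matrix.diagonal e *ᵥ y with hz
    have hUx : U *ᵥ x = A *ᵥ (V *ᵥ z) := by
      rw [hUdef, hz, hy]; simp only [← Matrix.mulVec_mulVec]
    have hzj : ∀ j, z j = e j * y j := fun j => by
      rw [hz]; exact Matrix.mulVec_diagonal e y j
    have step1 : (U *ᵥ x) ⬝ᵥ (U *ᵥ x) = ((Matrix.diagonal hA.eigenvalues) *ᵥ z) ⬝ᵥ z := by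
      rw [hUx, dot_mulVec_pair, Matrix.mulVec_mulVec, hGV, ← Matrix.mulVec_mulVec,
        dot_mulVec_pair V, hVtV, Matrix.one_mulVec]
    have step2 : ((Matrix.diagonal hA.eigenvalues) *ᵥ z) ⬝ᵥ z ≤ y ⬝ᵥ y := by
      simp only [dotProduct]
      refine Finset.sum_le_sum fun j _ => ?_
      rw [Matrix.mulVec_diagonal, hzj j]
      calc hA.eigenvalues j * (e j * y j) * (e j * y j)
          = (hA.eigenvalues j * e j * e j) * (y j * y j) := by ring
        _ ≤ 1 * (y j * y j) := mul_le_mul_of_nonneg_right (he j) (mul_self_nonneg _)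
        _ = y j * y j := one_mul _
    have step3 : y ⬝ᵥ y = x ⬝ᵥ x := by
      rw [hy, dot_mulVec_pair, Matrix.transpose_transpose, hVV, Matrix.one_mulVec]
    calc (U *ᵥ x) ⬝ᵥ (U *ᵥ x) = ((Matrix.diagonal hA.eigenvalues) *ᵥ z) ⬝ᵥ z := step1
      _ ≤ y ⬝ᵥ y := step2
      _ = x ⬝ᵥ x := step3
  -- tr (Uᵀ A) equals the nuclear norm of A
  have htr : (Uᵀ * A).trace = nuclearNorm A := by
    rw [trace_transpose_mul_eq_sum U A, nuclearNorm]
    refine Finset.sum_congr rfl fun j _ => ?_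
    have hVtv : Vᵀ *ᵥ ⇑(hA.eigenvectorBasis j) = Pi.single j 1 := by
      have h := hA.star_eigenvectorUnitary_mulVec j
      rwa [Matrix.star_eq_conjTranspose, Matrix.conjTranspose_eq_transpose_of_trivial] at h
    have hVs : V *ᵥ Pi.single j (e j) = e j • ⇑(hA.eigenvectorBasis j) := by
      rw [Matrix.mulVec_single]
      funext i
      simp [hVdef, mul_comm]
    have hUv : U *ᵥ ⇑(hA.eigenvectorBasis j) = e j • (A *ᵥ ⇑(hA.eigenvectorBasis j)) := by
      rw [hUdef]
      simp only [← Matrix.mulVec_mulVec]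
      rw [hVtv, Matrix.diagonal_mulVec_single, mul_one, hVs, Matrix.mulVec_smul]
    rw [hUv, smul_dotProduct, mulVec_eigvec_dot A j, smul_eq_mul, heval j]
  -- split the trace over the two column blocks
  set U₁ : Matrix m p ℝ := U.submatrix id Sum.inl with hU₁def
  set U₂ : Matrix m q ℝ := U.submatrix id Sum.inr with hU₂def
  have hsplit : (Uᵀ * A).trace = (U₁ᵀ * M).trace + (U₂ᵀ * N).trace := by
    simp only [Matrix.trace, Matrix.diag_apply, Matrix.mul_apply, Matrix.transpose_apply,
      Fintype.sum_sum_type, hU₁def, hU₂def, Matrix.submatrix_apply, id_eq, hAdef,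
      Matrix.fromCols_apply_inl, Matrix.fromCols_apply_inr]
  have hU₁ : ∀ x : p → ℝ, (U₁ *ᵥ x) ⬝ᵥ (U₁ *ᵥ x) ≤ x ⬝ᵥ x := by
    intro x
    have h1 : U₁ *ᵥ x = U *ᵥ (Sum.elim x 0) := by
      funext i
      simp [hU₁def, Matrix.mulVec, dotProduct, Fintype.sum_sum_type]
    have h2 : (Sum.elim x (0 : q → ℝ)) ⬝ᵥ (Sum.elim x 0) = x ⬝ᵥ x := by
      simp [dotProduct, Fintype.sum_sum_type]
    rw [h1, ← h2]
    exact hU _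
  have hU₂ : ∀ x : q → ℝ, (U₂ *ᵥ x) ⬝ᵥ (U₂ *ᵥ x) ≤ x ⬝ᵥ x := by
    intro x
    have h1 : U₂ *ᵥ x = U *ᵥ (Sum.elim 0 x) := by
      funext i
      simp [hU₂def, Matrix.mulVec, dotProduct, Fintype.sum_sum_type]
    have h2 : (Sum.elim (0 : p → ℝ) x) ⬝ᵥ (Sum.elim 0 x) = x ⬝ᵥ x := by
      simp [dotProduct, Fintype.sum_sum_type]
    rw [h1, ← h2]
    exact hU _
  calc nuclearNorm A = (U₁ᵀ * M).trace + (U₂ᵀ * N).trace := by rw [← htr, hsplit]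
    _ ≤ nuclearNorm M + nuclearNorm N :=
      add_le_add (trace_transpose_mul_le U₁ M hU₁) (trace_transpose_mul_le U₂ N hU₂)
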